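/- Let {(z_{k−1}, x_k, g_k, x̂_k)}_{k≥0} be generated by the general subgradient-based method (either variant (a) or (b)) with simple-average parameters λ_k := 1 and β_k := γ β̂_k for some γ > 0, where β̂_{−1} := β̂_0 := 1 and β̂_{k+1} := β̂_k + 1/β̂_k. Then for all k ≥ 0, f(x̂_k) − f(x*) ≤ (γ l_d(z_k; x*) + M_k²/(2σγ)) · (0.5 + √(2k+1))/(k+1), where M_{−1} := 0 and M_k := max_{0≤i≤k} ‖g_i‖_* for k ≥ 0; moreover, for all k ≥ −1 the points z_k, x_{k+1}, x̂_{k+1} lie in the set { x ∈ Q : ‖x − x*‖² ≤ 2 d(x*)/σ + M_k²/(σ²γ²) }. -/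

import Mathlib

lemma bhat_aux (bhat : ℕ → ℝ) (h0 : bhat 0 = 1) (h1 : bhat 1 = 1)
    (hrec : ∀ n, 1 ≤ n → bhat (n + 1) = bhat n + (bhat n)⁻¹) :
    ∀ n, 1 ≤ n → 1 ≤ bhat n ∧ (2 * n - 1 : ℝ) ≤ bhat n ^ 2 ∧
      bhat n ^ 2 ≤ (2 * n - 1 : ℝ) + Real.sqrt (2 * n - 1) + 1 / 4 := by
  intro n hn
  induction n with
  | zero => omega
  | succ m ih =>
    rcases Nat.lt_or_ge m 1 with h | hm1
    · have hm : m = 0 := by omega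
      subst hm
      have hone : (2 * ((0:ℕ)+1 : ℕ) - 1 : ℝ) = 1 := by push_cast; ring
      refine ⟨by rw [h1], by rw [h1, hone]; norm_num, ?_⟩
      rw [h1, hone, Real.sqrt_one]; norm_num
    · obtain ⟨hge1, hlo, hhi⟩ := ih hm1
      have hpos : (0:ℝ) < bhat m := by linarith
      have hrecm := hrec m hm1
      have hinvpos : 0 < (bhat m)⁻¹ := inv_pos.2 hpos
      have hge1' : (1 : ℝ) ≤ bhat (m + 1) := by rw [hrecm]; linarith
      have hsq : bhat (m + 1) ^ 2 = bhat m ^ 2 + 2 + ((bhat m)⁻¹) ^ 2 := by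
        rw [hrecm]; field_simp; ring
      set c : ℝ := 2 * m - 1 with hc
      have hcm : (1 : ℝ) ≤ c := by
        have : (1 : ℝ) ≤ (m : ℝ) := by exact_mod_cast hm1
        simp only [hc]; linarith
      have hcast : (2 * ((m:ℕ)+1 : ℕ) - 1 : ℝ) = c + 2 := by push_cast; ring
      refine ⟨hge1', ?_, ?_⟩
      · rw [hcast, hsq]
        nlinarith [sq_nonneg ((bhat m)⁻¹)]
      · rw [hcast, hsq]
        have hinvsq : ((bhat m)⁻¹) ^ 2 ≤ 1 / c := by
          rw [inv_eq_one_div, div_pow, one_pow]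
          exact one_div_le_one_div_of_le (by linarith) hlo
        rcases le_or_gt (3:ℝ) c with hc3 | hc3
        · -- m ≥ 2 case: key inequality √c + 1/c ≤ √(c+2)
          set a := Real.sqrt c with ha
          set b := Real.sqrt (c + 2) with hb
          have ha2 : a ^ 2 = c := Real.sq_sqrt (by linarith)
          have hb2 : b ^ 2 = c + 2 := Real.sq_sqrt (by linarith)
          have ha0 : 0 ≤ a := Real.sqrt_nonneg _
          have hb0 : 0 ≤ b := Real.sqrt_nonneg _
          have hab : a ≤ b := Real.sqrt_le_sqrt (by linarith)
          clear ih hsq hrecm hge1' hge1 hinvpos hpos hlo hcast h0 h1 hrec hn hm1 hc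
          have ha_le_c : a ≤ c := by nlinarith [sq_nonneg (a - 1)]
          have hb_le_c : b ≤ c := by nlinarith [sq_nonneg (b - 1)]
          have hba : 0 ≤ b - a := by linarith
          have hprod : (b - a) * (b + a) = 2 := by
            have : (b - a) * (b + a) = b ^ 2 - a ^ 2 := by ring
            rw [this, ha2, hb2]; ring
          have h1' : (b - a) * (b + a) ≤ (b - a) * (2 * c) :=
            mul_le_mul_of_nonneg_left (by linarith) hba
          have key1 : 1 ≤ (b - a) * c := by nlinarith
          have key : 1 / c ≤ b - a := (div_le_iff₀ (by linarith)).mpr key1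
          linarith
        · -- c < 3 means m = 1, bhat 2 = 2
          have hm : m = 1 := by
            have : (m : ℝ) < 2 := by simp only [hc] at hc3; linarith
            have : m < 2 := by exact_mod_cast this
            omega
          subst hm
          have hceq : c = 1 := by simp only [hc]; push_cast; ring
          rw [hceq, h1]
          have h3 : (1:ℝ) ≤ Real.sqrt 3 := by
            rw [show (1:ℝ) = Real.sqrt 1 from (Real.sqrt_one).symm]
            exact Real.sqrt_le_sqrt (by norm_num)
          norm_num
          linarith

lemma bhat_ub (bhat : ℕ → ℝ) (h0 : bhat 0 = 1) (h1 : bhat 1 = 1)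
    (hrec : ∀ n, 1 ≤ n → bhat (n + 1) = bhat n + (bhat n)⁻¹) :
    ∀ n, 1 ≤ n → bhat n ≤ 1 / 2 + Real.sqrt (2 * n - 1) := by
  intro n hn
  obtain ⟨hge1, hlo, hhi⟩ := bhat_aux bhat h0 h1 hrec n hn
  have hc0 : (0:ℝ) ≤ 2 * n - 1 := by
    have : (1:ℝ) ≤ (n:ℝ) := by exact_mod_cast hn
    linarith
  have hs := Real.sq_sqrt hc0
  have hs0 := Real.sqrt_nonneg (2 * (n:ℝ) - 1)
  nlinarith

lemma bhat_sum (bhat : ℕ → ℝ) (h0 : bhat 0 = 1) (h1 : bhat 1 = 1)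
    (hrec : ∀ n, 1 ≤ n → bhat (n + 1) = bhat n + (bhat n)⁻¹) :
    ∀ k, (∑ i ∈ Finset.range (k + 1), (bhat i)⁻¹) = bhat (k + 1) := by
  intro k
  induction k with
  | zero => simp [h0, h1]
  | succ k ih =>
    rw [Finset.sum_range_succ, ih, hrec (k + 1) (by omega)]

lemma bhat_pos (bhat : ℕ → ℝ) (h0 : bhat 0 = 1) (h1 : bhat 1 = 1)
    (hrec : ∀ n, 1 ≤ n → bhat (n + 1) = bhat n + (bhat n)⁻¹) :
    ∀ n, 0 < bhat n := by
  intro n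
  cases n with
  | zero => rw [h0]; norm_num
  | succ m =>
    have := (bhat_aux bhat h0 h1 hrec (m + 1) (by omega)).1
    linarith

set_option maxHeartbeats 2000000


/-- Corollary 4.2, simple averages: with `λ_k = 1` and `β_k = γ β̂_k`, the general
subgradient-based method (variant (a) or (b)) satisfies the optimal-rate estimate and
produces bounded iterates.  (Indices shifted: `z n`, `β n`, `bhat n`, `M n` stand for the
paper's `z_{n-1}`, `β_{n-1}`, `β̂_{n-1}`, `M_{n-1}`.) -/
theorem subgradient_method_simple_averages
    {E : Type*} [NormedAddCommGroup E] [NormedSpace ℝ E] [FiniteDimensional ℝ E]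
    (Q : Set E) (hQne : Q.Nonempty) (hQcl : IsClosed Q) (hQcv : Convex ℝ Q)
    (f : E → ℝ) (hf_cv : ConvexOn ℝ Q f) (hf_lsc : LowerSemicontinuousOn f Q)
    (σ : ℝ) (hσ : 0 < σ)
    (d : E → ℝ) (d' : E → E →L[ℝ] ℝ)
    (hd_sc : StrongConvexOn Q σ d)
    (hd_diff : ∀ y ∈ Q, HasFDerivWithinAt d (d' y) Q y)
    (x₀ : E) (hx₀Q : x₀ ∈ Q) (hdx₀ : d x₀ = 0) (hd_nonneg : ∀ u ∈ Q, 0 ≤ d u)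
    (hBreg : ∀ w ∈ Q, ∀ u ∈ Q, σ / 2 * ‖u - w‖ ^ 2 ≤ d u - d w - d' w (u - w))
    (lam : ℕ → ℝ) (hlam : ∀ k, 0 < lam k)
    (β : ℕ → ℝ) (hβ0 : 0 < β 0) (hβmono : ∀ k, β k ≤ β (k + 1))
    (x : ℕ → E) (hxQ : ∀ k, x k ∈ Q)
    (ψ : ℕ → E → ℝ) (z : ℕ → E)
    (hzQ : ∀ n, z n ∈ Q) (hzmin : ∀ n, ∀ u ∈ Q, ψ n (z n) ≤ ψ n u)
    (g : ℕ → E →L[ℝ] ℝ) (hg : ∀ k, ∀ y : E, f (x k) + g k (y - x k) ≤ f y)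
    (hP1a : ψ 0 (z 0) = 0) (hP1b : z 0 = x₀)
    (hP2 : ∀ n : ℕ, ∀ u ∈ Q,
      ψ n (z n) + lam n * (f (x n) + g n (u - x n)) + β (n + 1) * d u
        - β n * (d (z n) + d' (z n) (u - z n)) ≤ ψ (n + 1) u)
    (hP3 : ∀ k : ℕ, ∀ u ∈ Q,
      ψ (k + 1) (z (k + 1)) ≤ (∑ i ∈ Finset.range (k + 1), lam i * (f (x i) + g i (u - x i)))
        + β (k + 1) * (d (z (k + 1)) + d' (z (k + 1)) (u - z (k + 1))))
    (xs : E) (hxsQ : xs ∈ Q) (hxs_opt : ∀ u ∈ Q, f xs ≤ f u)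
    (xhat : ℕ → E)
    (hmethod :
      ((∀ k, x k = z k) ∧
        (∀ k, xhat k = (∑ i ∈ Finset.range (k + 1), lam i)⁻¹ • ∑ i ∈ Finset.range (k + 1), lam i • x i))
      ∨ ((∀ k, x k = (∑ i ∈ Finset.range (k + 1), lam i)⁻¹ • ∑ i ∈ Finset.range (k + 1), lam i • z i) ∧
        (∀ k, xhat k = x k)))
    (γ : ℝ) (hγ : 0 < γ)
    (bhat : ℕ → ℝ) (hbhat0 : bhat 0 = 1) (hbhat1 : bhat 1 = 1)
    (hbhatrec : ∀ n, 1 ≤ n → bhat (n + 1) = bhat n + (bhat n)⁻¹)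
    (hlam1 : ∀ k, lam k = 1) (hβ : ∀ n, β n = γ * bhat n)
    (M : ℕ → ℝ) (hM0 : M 0 = 0) (hMrec : ∀ n, M (n + 1) = max (M n) ‖g n‖) :
    (∀ k : ℕ, f (xhat k) - f xs ≤
      (γ * (d (z (k + 1)) + d' (z (k + 1)) (xs - z (k + 1))) + (M (k + 1)) ^ 2 / (2 * σ * γ)) *
        ((0.5 + Real.sqrt (2 * (k : ℝ) + 1)) / ((k : ℝ) + 1)))
    ∧ (∀ n : ℕ,
      (z n ∈ Q ∧ ‖z n - xs‖ ^ 2 ≤ 2 * d xs / σ + (M n) ^ 2 / (σ ^ 2 * γ ^ 2)) ∧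
      (x n ∈ Q ∧ ‖x n - xs‖ ^ 2 ≤ 2 * d xs / σ + (M n) ^ 2 / (σ ^ 2 * γ ^ 2)) ∧
      (xhat n ∈ Q ∧ ‖xhat n - xs‖ ^ 2 ≤ 2 * d xs / σ + (M n) ^ 2 / (σ ^ 2 * γ ^ 2))) := by
  classical
  -- positivity facts
  have hβpos : ∀ n, 0 < β n := by
    intro n
    induction n with
    | zero => exact hβ0
    | succ m ih => exact lt_of_lt_of_le ih (hβmono m)
  have hbpos : ∀ n, 0 < bhat n := bhat_pos bhat hbhat0 hbhat1 hbhatrec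
  have hMnonneg : ∀ n, 0 ≤ M n := by
    intro n
    induction n with
    | zero => rw [hM0]
    | succ m ih => rw [hMrec]; exact le_trans ih (le_max_left _ _)
  have hMmono : Monotone M := monotone_nat_of_le_succ (fun n => by
    rw [hMrec]; exact le_max_left _ _)
  have hgM : ∀ n, ‖g n‖ ≤ M (n + 1) := fun n => by
    rw [hMrec]; exact le_max_right _ _
  have hdxs : 0 ≤ d xs := hd_nonneg xs hxsQ
  have hsumlam : ∀ m : ℕ, (∑ i ∈ Finset.range (m + 1), lam i) = ((m : ℝ) + 1) := by
    intro m
    rw [Finset.sum_congr rfl (fun i _ => hlam1 i), Finset.sum_const, Finset.card_range,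
      nsmul_eq_mul, mul_one]
    push_cast; ring
  -- step lower bound
  have hterm : ∀ n : ℕ, f (x n) + g n (z n - x n) - ‖g n‖ ^ 2 / (2 * σ * β n) + ψ n (z n)
      ≤ ψ (n + 1) (z (n + 1)) := by
    intro n
    have h2 := hP2 n (z (n + 1)) (hzQ (n + 1))
    rw [hlam1 n, one_mul] at h2
    have hbreg := hBreg (z n) (hzQ n) (z (n + 1)) (hzQ (n + 1))
    have hdp := hd_nonneg (z (n + 1)) (hzQ (n + 1))
    have hβm := hβmono n
    have hβn := hβpos n
    set t := ‖z (n + 1) - z n‖ with ht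
    have ht0 : 0 ≤ t := norm_nonneg _
    have hsplit : g n (z (n + 1) - x n) = g n (z n - x n) + g n (z (n + 1) - z n) := by
      rw [← map_add]; congr 1; abel
    have hbb : -(‖g n‖ * t) ≤ g n (z (n + 1) - z n) := by
      have h := (g n).le_opNorm (z (n + 1) - z n)
      rw [Real.norm_eq_abs] at h
      exact neg_le_of_abs_le h
    have h2σβ : (0 : ℝ) < 2 * σ * β n := by positivity
    have hnum : 0 ≤ ‖g n‖ ^ 2
        + (g n (z (n + 1) - z n) + β n * (σ / 2 * t ^ 2)) * (2 * σ * β n) := by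
      have hbb2 : (-(‖g n‖ * t)) * (2 * σ * β n) ≤ g n (z (n + 1) - z n) * (2 * σ * β n) :=
        mul_le_mul_of_nonneg_right hbb h2σβ.le
      nlinarith [sq_nonneg (σ * β n * t - ‖g n‖)]
    have hquad : 0 ≤ ‖g n‖ ^ 2 / (2 * σ * β n)
        + (g n (z (n + 1) - z n) + β n * (σ / 2 * t ^ 2)) := by
      have h := div_nonneg hnum h2σβ.le
      rwa [add_div, mul_div_cancel_right₀ _ (ne_of_gt h2σβ)] at h
    have hmul : β n * (σ / 2 * t ^ 2)
        ≤ β n * (d (z (n + 1)) - d (z n) - d' (z n) (z (n + 1) - z n)) :=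
      mul_le_mul_of_nonneg_left hbreg hβn.le
    have hdd : 0 ≤ (β (n + 1) - β n) * d (z (n + 1)) := mul_nonneg (by linarith) hdp
    rw [hsplit] at h2
    linarith [h2, hquad, hmul, hdd]
  -- telescoped lower bound
  have hlow : ∀ k : ℕ, (∑ n ∈ Finset.range (k + 1),
      (f (x n) + g n (z n - x n) - ‖g n‖ ^ 2 / (2 * σ * β n))) ≤ ψ (k + 1) (z (k + 1)) := by
    intro k
    induction k with
    | zero =>
      have h := hterm 0
      rw [hP1a, add_zero] at h
      simpa [Finset.sum_range_one] using h
    | succ k ih =>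
      rw [Finset.sum_range_succ]
      have h := hterm (k + 1)
      linarith
  -- upper bound at xs
  have hup : ∀ k : ℕ, ψ (k + 1) (z (k + 1)) ≤ ((k : ℝ) + 1) * f xs
      + β (k + 1) * (d (z (k + 1)) + d' (z (k + 1)) (xs - z (k + 1))) := by
    intro k
    have h3 := hP3 k xs hxsQ
    have hsum : (∑ i ∈ Finset.range (k + 1), lam i * (f (x i) + g i (xs - x i)))
        ≤ ∑ _i ∈ Finset.range (k + 1), f xs := by
      apply Finset.sum_le_sum
      intro i _
      rw [hlam1 i, one_mul]
      exact hg i xs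
    rw [Finset.sum_const, Finset.card_range, nsmul_eq_mul] at hsum
    have hc : ((k + 1 : ℕ) : ℝ) = (k : ℝ) + 1 := by push_cast; ring
    rw [hc] at hsum
    linarith
  -- sum of gradient terms
  have hsumg : ∀ k : ℕ, (∑ n ∈ Finset.range (k + 1), ‖g n‖ ^ 2 / (2 * σ * β n))
      ≤ M (k + 1) ^ 2 / (2 * σ * γ) * bhat (k + 1) := by
    intro k
    have hstep : ∀ n ∈ Finset.range (k + 1),
        ‖g n‖ ^ 2 / (2 * σ * β n) ≤ M (k + 1) ^ 2 / (2 * σ * γ) * (bhat n)⁻¹ := by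
      intro n hn
      have hn' : n + 1 ≤ k + 1 := by
        have := Finset.mem_range.mp hn; omega
      have hbn := hbpos n
      have hgle : ‖g n‖ ≤ M (k + 1) := le_trans (hgM n) (hMmono hn')
      have hg2 : ‖g n‖ ^ 2 ≤ M (k + 1) ^ 2 := by nlinarith [norm_nonneg (g n)]
      rw [hβ n]
      have hrw : M (k + 1) ^ 2 / (2 * σ * γ) * (bhat n)⁻¹
          = M (k + 1) ^ 2 / (2 * σ * γ * bhat n) := by
        rw [← div_eq_mul_inv, div_div]
      rw [show 2 * σ * (γ * bhat n) = 2 * σ * γ * bhat n by ring, hrw]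
      exact (div_le_div_iff_of_pos_right (mul_pos (mul_pos (mul_pos two_pos hσ) hγ) hbn)).mpr hg2
    calc (∑ n ∈ Finset.range (k + 1), ‖g n‖ ^ 2 / (2 * σ * β n))
        ≤ ∑ n ∈ Finset.range (k + 1), M (k + 1) ^ 2 / (2 * σ * γ) * (bhat n)⁻¹ :=
          Finset.sum_le_sum hstep
      _ = M (k + 1) ^ 2 / (2 * σ * γ) * ∑ n ∈ Finset.range (k + 1), (bhat n)⁻¹ := by
          rw [Finset.mul_sum]
      _ = M (k + 1) ^ 2 / (2 * σ * γ) * bhat (k + 1) := by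
          rw [bhat_sum bhat hbhat0 hbhat1 hbhatrec k]
  -- membership of xhat
  have hxhatQ : ∀ k : ℕ, xhat k ∈ Q := by
    intro k
    rcases hmethod with ⟨hxz, hxh⟩ | ⟨hxavg, hxh⟩
    · have heq : xhat k = ∑ i ∈ Finset.range (k + 1), ((k : ℝ) + 1)⁻¹ • x i := by
        rw [hxh k, hsumlam k, Finset.smul_sum]
        refine Finset.sum_congr rfl (fun i _ => ?_)
        rw [hlam1 i, one_smul]
      rw [heq]
      refine hQcv.sum_mem (fun i _ => by positivity) ?_ (fun i _ => hxQ i)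
      rw [Finset.sum_const, Finset.card_range, nsmul_eq_mul]
      push_cast
      field_simp
    · rw [hxh k]; exact hxQ k
  -- Jensen / telescoping
  have hjensen : ∀ k : ℕ, ((k : ℝ) + 1) * f (xhat k)
      ≤ ∑ n ∈ Finset.range (k + 1), (f (x n) + g n (z n - x n)) := by
    intro k
    rcases hmethod with ⟨hxz, hxh⟩ | ⟨hxavg, hxh⟩
    · -- variant (a)
      have hzero : ∀ n, g n (z n - x n) = 0 := by
        intro n; rw [hxz n, sub_self, map_zero]
      have hsimp : (∑ n ∈ Finset.range (k + 1), (f (x n) + g n (z n - x n)))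
          = ∑ n ∈ Finset.range (k + 1), f (x n) := by
        refine Finset.sum_congr rfl (fun n _ => ?_)
        rw [hzero n, add_zero]
      rw [hsimp]
      have heq : xhat k = ∑ i ∈ Finset.range (k + 1), ((k : ℝ) + 1)⁻¹ • x i := by
        rw [hxh k, hsumlam k, Finset.smul_sum]
        refine Finset.sum_congr rfl (fun i _ => ?_)
        rw [hlam1 i, one_smul]
      have hk1 : (0 : ℝ) < (k : ℝ) + 1 := by positivity
      have hw1 : (∑ _i ∈ Finset.range (k + 1), ((k : ℝ) + 1)⁻¹) = 1 := by
        rw [Finset.sum_const, Finset.card_range, nsmul_eq_mul]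
        push_cast
        field_simp
      have hj := hf_cv.map_sum_le (t := Finset.range (k + 1))
        (w := fun _ => ((k : ℝ) + 1)⁻¹) (p := x)
        (fun i _ => by positivity) hw1 (fun i _ => hxQ i)
      have hj2 : f (xhat k) ≤ ((k : ℝ) + 1)⁻¹ * ∑ i ∈ Finset.range (k + 1), f (x i) := by
        rw [heq, Finset.mul_sum]
        exact hj
      calc ((k : ℝ) + 1) * f (xhat k)
          ≤ ((k : ℝ) + 1) * (((k : ℝ) + 1)⁻¹ * ∑ i ∈ Finset.range (k + 1), f (x i)) :=
            mul_le_mul_of_nonneg_left hj2 hk1.le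
        _ = ∑ i ∈ Finset.range (k + 1), f (x i) := by
            rw [← mul_assoc, mul_inv_cancel₀ (ne_of_gt hk1), one_mul]
    · -- variant (b): telescoping
      have hxform : ∀ m : ℕ, x m = ((m : ℝ) + 1)⁻¹ • ∑ i ∈ Finset.range (m + 1), z i := by
        intro m
        rw [hxavg m, hsumlam m]
        congr 1
        refine Finset.sum_congr rfl (fun i _ => ?_)
        rw [hlam1 i, one_smul]
      have hsumz : ∀ m : ℕ, (∑ i ∈ Finset.range (m + 1), z i) = ((m : ℝ) + 1) • x m := by
        intro m
        rw [hxform m, smul_smul, mul_inv_cancel₀ (by positivity), one_smul]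
      have hx0 : x 0 = z 0 := by
        rw [hxform 0]
        simp [Finset.sum_range_one]
      rw [hxh k]
      induction k with
      | zero =>
        rw [Finset.sum_range_one, hx0, sub_self, map_zero, add_zero]
        norm_num
      | succ k ih =>
        have hzx : z (k + 1) - x (k + 1) = ((k : ℝ) + 1) • (x (k + 1) - x k) := by
          have h1 : z (k + 1) = (((k : ℝ) + 1) + 1) • x (k + 1) - ((k : ℝ) + 1) • x k := by
            have h2 := hsumz (k + 1)
            rw [Finset.sum_range_succ, hsumz k] at h2
            have hc : ((k + 1 : ℕ) : ℝ) = (k : ℝ) + 1 := by push_cast; ring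
            rw [hc] at h2
            exact (sub_eq_of_eq_add' h2.symm).symm
          rw [h1]
          module
        have hsub : f (x (k + 1)) - f (x k) ≤ g (k + 1) (x (k + 1) - x k) := by
          have h := hg (k + 1) (x k)
          rw [show x k - x (k + 1) = -(x (k + 1) - x k) by abel, map_neg] at h
          linarith
        have hgval : g (k + 1) (z (k + 1) - x (k + 1))
            = ((k : ℝ) + 1) * g (k + 1) (x (k + 1) - x k) := by
          rw [hzx, map_smul, smul_eq_mul]
        rw [Finset.sum_range_succ]
        have hc : ((k + 1 : ℕ) : ℝ) = (k : ℝ) + 1 := by push_cast; ring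
        rw [hc]
        have hterm2 : ((k : ℝ) + 1 + 1) * f (x (k + 1)) - ((k : ℝ) + 1) * f (x k)
            ≤ f (x (k + 1)) + g (k + 1) (z (k + 1) - x (k + 1)) := by
          rw [hgval]
          have h9 := mul_le_mul_of_nonneg_left hsub
            (by positivity : (0 : ℝ) ≤ (k : ℝ) + 1)
          linarith
        linarith [ih]
  have hfxhat : ∀ k : ℕ, f xs ≤ f (xhat k) := fun k => hxs_opt _ (hxhatQ k)
  -- key estimate
  have hkey : ∀ k : ℕ, ((k : ℝ) + 1) * (f (xhat k) - f xs) ≤ bhat (k + 1) *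
      (γ * (d (z (k + 1)) + d' (z (k + 1)) (xs - z (k + 1))) + M (k + 1) ^ 2 / (2 * σ * γ)) := by
    intro k
    have hsplit : (∑ n ∈ Finset.range (k + 1),
        (f (x n) + g n (z n - x n) - ‖g n‖ ^ 2 / (2 * σ * β n)))
        = (∑ n ∈ Finset.range (k + 1), (f (x n) + g n (z n - x n)))
          - ∑ n ∈ Finset.range (k + 1), ‖g n‖ ^ 2 / (2 * σ * β n) := by
      rw [← Finset.sum_sub_distrib]
    have h1 := hlow k
    have h2 := hup k
    have h3 := hjensen k
    have h4 := hsumg k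
    rw [hsplit] at h1
    rw [hβ (k + 1)] at h2
    nlinarith [h1, h2, h3, h4]
  constructor
  · -- part 1
    intro k
    have hk1 : (0 : ℝ) < (k : ℝ) + 1 := by positivity
    have hub := bhat_ub bhat hbhat0 hbhat1 hbhatrec (k + 1) (by omega)
    have hcast : (2 * ((k + 1 : ℕ) : ℝ) - 1) = 2 * (k : ℝ) + 1 := by push_cast; ring
    rw [hcast] at hub
    set C := γ * (d (z (k + 1)) + d' (z (k + 1)) (xs - z (k + 1)))
      + M (k + 1) ^ 2 / (2 * σ * γ) with hC
    have hkeyk := hkey k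
    have hfk := hfxhat k
    have hCnn : 0 ≤ C := by
      by_contra hneg
      push_neg at hneg
      have h1 : 0 ≤ ((k : ℝ) + 1) * (f (xhat k) - f xs) :=
        mul_nonneg hk1.le (by linarith)
      have h2 := mul_neg_of_pos_of_neg (hbpos (k + 1)) hneg
      rw [← hC] at hkeyk
      linarith
    have h2 : ((k : ℝ) + 1) * (f (xhat k) - f xs) ≤ (1 / 2 + Real.sqrt (2 * (k : ℝ) + 1)) * C :=
      le_trans hkeyk (mul_le_mul_of_nonneg_right hub hCnn)
    have h05 : (0.5 : ℝ) = 1 / 2 := by norm_num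
    rw [h05, ← mul_div_assoc, le_div_iff₀ hk1]
    rw [← hC] at hkeyk
    linarith [h2]
  · -- part 2
    have hzb : ∀ n : ℕ, ‖z n - xs‖ ^ 2 ≤ 2 * d xs / σ + M n ^ 2 / (σ ^ 2 * γ ^ 2) := by
      intro n
      cases n with
      | zero =>
        rw [hM0, hP1b]
        have hA : σ / 2 * ‖xs - x₀‖ ^ 2 ≤ d xs := by
          set A := ‖xs - x₀‖ ^ 2 with hA'
          have hA0 : 0 ≤ A := sq_nonneg _
          refine le_of_forall_pos_le_add (fun ε hε => ?_)
          set t : ℝ := min (1 / 2) (ε / (σ / 2 * A + 1)) with htdef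
          have hden : (0 : ℝ) < σ / 2 * A + 1 := by positivity
          have ht0 : 0 < t := lt_min (by norm_num) (div_pos hε hden)
          have ht1 : t ≤ 1 / 2 := min_le_left _ _
          have hcomb := hd_sc.2 hx₀Q hxsQ (show (0:ℝ) ≤ 1 - t by linarith) ht0.le
            (show (1 - t) + t = 1 by ring)
          have hmem : (1 - t) • x₀ + t • xs ∈ Q :=
            hQcv hx₀Q hxsQ (by linarith) ht0.le (by ring)
          have hnn := hd_nonneg _ hmem
          rw [hdx₀] at hcomb
          simp only [smul_eq_mul, mul_zero] at hcomb
          rw [norm_sub_rev] at hcomb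
          -- hcomb : d ((1-t) • x₀ + t • xs) ≤ t * d xs - (1-t)*t*(σ/2 * ‖xs - x₀‖^2)
          have h5 : 0 ≤ t * d xs - (1 - t) * t * (σ / 2 * A) := by
            rw [hA']; linarith
          have h6 : (1 - t) * (σ / 2 * A) ≤ d xs := by
            have := (mul_le_mul_iff_right₀ ht0).mp (by linarith : t * ((1 - t) * (σ / 2 * A)) ≤ t * d xs)
            linarith [this]
          have h7 : t * (σ / 2 * A) ≤ ε := by
            have h8 : t ≤ ε / (σ / 2 * A + 1) := min_le_right _ _
            have h9 : t * (σ / 2 * A + 1) ≤ ε := by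
              calc t * (σ / 2 * A + 1) ≤ ε / (σ / 2 * A + 1) * (σ / 2 * A + 1) :=
                    mul_le_mul_of_nonneg_right h8 hden.le
                _ = ε := by field_simp
            nlinarith [ht0]
          linarith
        rw [norm_sub_rev]
        have hgoal : ‖xs - x₀‖ ^ 2 ≤ 2 * d xs / σ := by
          rw [le_div_iff₀ hσ]
          nlinarith [hA]
        have : (0 : ℝ) ^ 2 / (σ ^ 2 * γ ^ 2) = 0 := by norm_num
        rw [this, add_zero]
        exact hgoal
      | succ m =>
        -- chain lower/upper bounds
        set W := ‖xs - z (m + 1)‖ ^ 2 with hW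
        have hld := hBreg (z (m + 1)) (hzQ (m + 1)) xs hxsQ
        have h1 := hlow m
        have h2 := hup m
        have h3 := hjensen m
        have h4 := hsumg m
        have h5 := hfxhat m
        have hb := hβpos (m + 1)
        have hm1 : (0 : ℝ) < (m : ℝ) + 1 := by positivity
        have hL : β (m + 1) * (d (z (m + 1)) + d' (z (m + 1)) (xs - z (m + 1)))
            ≤ β (m + 1) * (d xs - σ / 2 * W) :=
          mul_le_mul_of_nonneg_left (by rw [hW]; linarith) hb.le
        have hbb : bhat (m + 1) = β (m + 1) / γ := by
          rw [hβ (m + 1)]; field_simp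
        have hsplit : (∑ n ∈ Finset.range (m + 1),
            (f (x n) + g n (z n - x n) - ‖g n‖ ^ 2 / (2 * σ * β n)))
            = (∑ n ∈ Finset.range (m + 1), (f (x n) + g n (z n - x n)))
              - ∑ n ∈ Finset.range (m + 1), ‖g n‖ ^ 2 / (2 * σ * β n) := by
          rw [← Finset.sum_sub_distrib]
        rw [hsplit] at h1
        rw [hbb] at h4
        have hmul5 : ((m : ℝ) + 1) * f xs ≤ ((m : ℝ) + 1) * f (xhat m) :=
          mul_le_mul_of_nonneg_left h5 hm1.le
        -- combine: β(m+1) * (σ/2 * W) ≤ β(m+1) * (d xs + M^2/(2σγ^2))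
        have hcomb : β (m + 1) * (σ / 2 * W)
            ≤ β (m + 1) * (d xs + M (m + 1) ^ 2 / (2 * σ * γ ^ 2)) := by
          have hrw : M (m + 1) ^ 2 / (2 * σ * γ) * (β (m + 1) / γ)
              = β (m + 1) * (M (m + 1) ^ 2 / (2 * σ * γ ^ 2)) := by
            field_simp
          rw [hrw] at h4
          nlinarith [h1, h2, h3, h4, hmul5, hL]
        have hineq : σ / 2 * W ≤ d xs + M (m + 1) ^ 2 / (2 * σ * γ ^ 2) :=
          le_of_mul_le_mul_left (by linarith [hcomb]) hb
        have hWle : W ≤ 2 / σ * (d xs + M (m + 1) ^ 2 / (2 * σ * γ ^ 2)) := by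
          have h := mul_le_mul_of_nonneg_left hineq (by positivity : (0 : ℝ) ≤ 2 / σ)
          calc W = 2 / σ * (σ / 2 * W) := by field_simp
            _ ≤ _ := h
        have hfinal : 2 / σ * (d xs + M (m + 1) ^ 2 / (2 * σ * γ ^ 2))
            = 2 * d xs / σ + M (m + 1) ^ 2 / (σ ^ 2 * γ ^ 2) := by
          field_simp
        rw [norm_sub_rev, ← hW]
        rw [hfinal] at hWle
        exact hWle
    -- transfer bound to averages
    have hBnn : ∀ n : ℕ, (0 : ℝ) ≤ 2 * d xs / σ + M n ^ 2 / (σ ^ 2 * γ ^ 2) := by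
      intro n
      have h1 : (0 : ℝ) ≤ 2 * d xs / σ := by positivity
      have h2 : (0 : ℝ) ≤ M n ^ 2 / (σ ^ 2 * γ ^ 2) := by positivity
      linarith
    have hznorm : ∀ n i : ℕ, i ≤ n →
        ‖z i - xs‖ ≤ Real.sqrt (2 * d xs / σ + M n ^ 2 / (σ ^ 2 * γ ^ 2)) := by
      intro n i hi
      have h1 := hzb i
      have hM2 : M i ^ 2 ≤ M n ^ 2 := by
        nlinarith [hMmono hi, hMnonneg i]
      have hdivle : M i ^ 2 / (σ ^ 2 * γ ^ 2) ≤ M n ^ 2 / (σ ^ 2 * γ ^ 2) := by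
        gcongr
      refine (Real.le_sqrt (norm_nonneg _) (hBnn n)).mpr ?_
      linarith
    have havg : ∀ n : ℕ, ‖(((n : ℝ) + 1)⁻¹ • ∑ i ∈ Finset.range (n + 1), z i) - xs‖ ^ 2
        ≤ 2 * d xs / σ + M n ^ 2 / (σ ^ 2 * γ ^ 2) := by
      intro n
      set B := 2 * d xs / σ + M n ^ 2 / (σ ^ 2 * γ ^ 2) with hB
      have hc : (0 : ℝ) < (n : ℝ) + 1 := by positivity
      have heq : (((n : ℝ) + 1)⁻¹ • ∑ i ∈ Finset.range (n + 1), z i) - xs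
          = ((n : ℝ) + 1)⁻¹ • ∑ i ∈ Finset.range (n + 1), (z i - xs) := by
        rw [Finset.sum_sub_distrib, smul_sub, Finset.sum_const, Finset.card_range]
        congr 1
        rw [← Nat.cast_smul_eq_nsmul ℝ, smul_smul]
        rw [show ((n + 1 : ℕ) : ℝ) = (n : ℝ) + 1 by push_cast; ring]
        rw [inv_mul_cancel₀ (ne_of_gt hc), one_smul]
      have hnorm : ‖(((n : ℝ) + 1)⁻¹ • ∑ i ∈ Finset.range (n + 1), z i) - xs‖
          ≤ Real.sqrt B := by
        rw [heq, norm_smul, Real.norm_eq_abs, abs_of_pos (inv_pos.mpr hc)]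
        calc ((n : ℝ) + 1)⁻¹ * ‖∑ i ∈ Finset.range (n + 1), (z i - xs)‖
            ≤ ((n : ℝ) + 1)⁻¹ * ∑ i ∈ Finset.range (n + 1), ‖z i - xs‖ :=
              mul_le_mul_of_nonneg_left (norm_sum_le _ _) (by positivity)
          _ ≤ ((n : ℝ) + 1)⁻¹ * ∑ _i ∈ Finset.range (n + 1), Real.sqrt B := by
              refine mul_le_mul_of_nonneg_left ?_ (by positivity)
              refine Finset.sum_le_sum (fun i hi => ?_)
              exact hznorm n i (by have := Finset.mem_range.mp hi; omega)
          _ = Real.sqrt B := by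
              rw [Finset.sum_const, Finset.card_range, nsmul_eq_mul]
              rw [show ((n + 1 : ℕ) : ℝ) = (n : ℝ) + 1 by push_cast; ring]
              rw [← mul_assoc, inv_mul_cancel₀ (ne_of_gt hc), one_mul]
      calc ‖(((n : ℝ) + 1)⁻¹ • ∑ i ∈ Finset.range (n + 1), z i) - xs‖ ^ 2
          ≤ Real.sqrt B ^ 2 := by
            have := pow_le_pow_left₀ (norm_nonneg _) hnorm 2
            exact this
        _ = B := Real.sq_sqrt (hBnn n)
    intro n
    have hxb : ‖x n - xs‖ ^ 2 ≤ 2 * d xs / σ + M n ^ 2 / (σ ^ 2 * γ ^ 2) := by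
      rcases hmethod with ⟨hxz, hxh⟩ | ⟨hxavg, hxh⟩
      · rw [hxz n]; exact hzb n
      · have hxform : x n = ((n : ℝ) + 1)⁻¹ • ∑ i ∈ Finset.range (n + 1), z i := by
          rw [hxavg n, hsumlam n]
          congr 1
          refine Finset.sum_congr rfl (fun i _ => ?_)
          rw [hlam1 i, one_smul]
        rw [hxform]
        exact havg n
    have hxhatb : ‖xhat n - xs‖ ^ 2 ≤ 2 * d xs / σ + M n ^ 2 / (σ ^ 2 * γ ^ 2) := by
      rcases hmethod with ⟨hxz, hxh⟩ | ⟨hxavg, hxh⟩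
      · have hxform : xhat n = ((n : ℝ) + 1)⁻¹ • ∑ i ∈ Finset.range (n + 1), z i := by
          rw [hxh n, hsumlam n]
          congr 1
          refine Finset.sum_congr rfl (fun i _ => ?_)
          rw [hlam1 i, one_smul, hxz i]
        rw [hxform]
        exact havg n
      · rw [hxh n]
        exact hxb
    exact ⟨⟨hzQ n, hzb n⟩, ⟨hxQ n, hxb⟩, ⟨hxhatQ n, hxhatb⟩⟩
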